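/- arXiv:1611.07440 — 3 statements merged into one kernel-verified Lean document; each statement's English description precedes it below -/
import Mathlib

section
/- Let Y be a nonnegative random variable with E(Y⁴) < ∞ and let σ* > 0. Then there exists a nonincreasing sequence (δ_n)_{n≥1} of positive real numbers such that δ_n → 0, δ_n²·√n → ∞ as n → ∞, and Σ_{n=1}^∞ 2^{2n}·P(Y > σ*·δ_{2^n}·2^{(n−1)/2}) < ∞. -/
open MeasureTheory Filter ENNReal


lemma stmt1_core {Ω : Type*} [MeasurableSpace Ω] (μ : Measure Ω)
    (Y : Ω → ℝ) (hYnonneg : ∀ ω, 0 ≤ Y ω) (hYmeas : Measurable Y)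
    (hY4 : Integrable (fun ω => Y ω ^ 4) μ)
    {c : ℝ} (hc : 0 < c) :
    ∑' n : ℕ, (2:ℝ≥0∞)^(2*n) * μ {ω | c * (2:ℝ)^(((n:ℝ)-1)/2) < Y ω} ≠ ∞ := by
  set A : ℕ → Set Ω := fun n => {ω | c * (2:ℝ)^(((n:ℝ)-1)/2) < Y ω} with hA_def
  have hA : ∀ n, MeasurableSet (A n) := fun n => measurableSet_lt measurable_const hYmeas
  set C : ℝ≥0∞ := ENNReal.ofReal (6 / c^4) with hC_def
  -- pointwise bound
  have hpt : ∀ ω, (∑' n : ℕ, (A n).indicator (fun _ => (2:ℝ≥0∞)^(2*n)) ω)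
      ≤ C * ENNReal.ofReal (Y ω ^ 4) := by
    intro ω
    set y := Y ω with hy_def
    have hy : 0 ≤ y := hYnonneg ω
    set B : ℝ := 4 * y^4 / c^4 with hB_def
    set m : ℕ := ⌈Real.logb 4 B⌉₊ with hm_def
    have claim1 : ∀ n : ℕ, ω ∈ A n → (4:ℝ)^n < B := by
      intro n hn
      have ht : c * (2:ℝ)^(((n:ℝ)-1)/2) < y := hn
      have hr : (0:ℝ) < (2:ℝ)^(((n:ℝ)-1)/2) := Real.rpow_pos_of_pos two_pos _
      have hpos : 0 < c * (2:ℝ)^(((n:ℝ)-1)/2) := mul_pos hc hr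
      have h4 : (c * (2:ℝ)^(((n:ℝ)-1)/2))^4 < y^4 := by
        exact pow_lt_pow_left₀ ht hpos.le (by norm_num)
      have hr4 : ((2:ℝ)^(((n:ℝ)-1)/2))^(4:ℕ) = (4:ℝ)^n / 4 := by
        rw [← Real.rpow_natCast ((2:ℝ)^(((n:ℝ)-1)/2)) 4, ← Real.rpow_mul (by norm_num)]
        have : (((n:ℝ)-1)/2) * (4:ℕ) = 2*(n:ℝ) - 2 := by push_cast; ring
        rw [this, Real.rpow_sub two_pos]
        norm_num
        rw [show (2:ℝ)*(n:ℝ) = ((2*n : ℕ) : ℝ) by push_cast; ring, Real.rpow_natCast,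
          pow_mul]
        norm_num
      rw [mul_pow, hr4] at h4
      have hc4 : (0:ℝ) < c^4 := pow_pos hc 4
      rw [hB_def, lt_div_iff₀ hc4]
      nlinarith
    have claim2 : ∀ n : ℕ, ω ∈ A n → n < m := by
      intro n hn
      have h1 : (4:ℝ)^n < B := claim1 n hn
      have hB : 0 < B := lt_trans (by positivity) h1
      have : (n:ℝ) < Real.logb 4 B := by
        rw [Real.lt_logb_iff_rpow_lt (by norm_num) hB, Real.rpow_natCast]
        exact h1
      exact Nat.lt_ceil.2 this
    have hsum : ∀ F : Finset ℕ, (∑ n ∈ F, (A n).indicator (fun _ => (2:ℝ≥0∞)^(2*n)) ω)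
        ≤ C * ENNReal.ofReal (y ^ 4) := by
      intro F
      have step1 : (∑ n ∈ F, (A n).indicator (fun _ => (2:ℝ≥0∞)^(2*n)) ω)
          ≤ ∑ n ∈ Finset.range m, (4:ℝ≥0∞)^n := by
        calc (∑ n ∈ F, (A n).indicator (fun _ => (2:ℝ≥0∞)^(2*n)) ω)
            ≤ ∑ n ∈ F, (if n < m then (4:ℝ≥0∞)^n else 0) := by
              apply Finset.sum_le_sum
              intro n _
              by_cases hn : ω ∈ A n
              · rw [Set.indicator_of_mem hn, if_pos (claim2 n hn), pow_mul]
                norm_num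
              · rw [Set.indicator_of_notMem hn]
                exact zero_le
          _ = ∑ n ∈ F.filter (· < m), (4:ℝ≥0∞)^n := by
              rw [Finset.sum_filter]
          _ ≤ ∑ n ∈ Finset.range m, (4:ℝ≥0∞)^n := by
              apply Finset.sum_le_sum_of_subset
              intro n hn
              simp only [Finset.mem_filter] at hn
              exact Finset.mem_range.2 hn.2
      have step2 : (∑ n ∈ Finset.range m, (4:ℝ≥0∞)^n)
          = ENNReal.ofReal (∑ n ∈ Finset.range m, (4:ℝ)^n) := by
        rw [ENNReal.ofReal_sum_of_nonneg (fun n _ => by positivity)]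
        refine Finset.sum_congr rfl fun n _ => ?_
        rw [ENNReal.ofReal_pow (by norm_num), ENNReal.ofReal_ofNat]
      have step3 : (∑ n ∈ Finset.range m, (4:ℝ)^n) ≤ 6 / c^4 * y^4 := by
        have hc4 : (0:ℝ) < c^4 := pow_pos hc 4
        rcases Nat.eq_zero_or_pos m with hm0 | hm1
        · rw [hm0]
          simp
          positivity
        · have hB : 0 < B := by
            have hlogb := (Nat.ceil_pos.1 hm1 : (0:ℝ) < Real.logb 4 B)
            have hB0 : 0 ≤ B := by rw [hB_def]; positivity
            rcases hB0.eq_or_lt with h | h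
            · rw [hB_def] at h
              rw [hB_def, ← h] at hlogb
              simp [Real.logb_zero] at hlogb
            · exact h
          have hk : ((m-1 : ℕ):ℝ) < Real.logb 4 B := Nat.lt_ceil.1 (by omega)
          have h4k : (4:ℝ)^(m-1) < B := by
            have h2 : (4:ℝ)^(((m-1:ℕ)):ℝ) < (4:ℝ)^(Real.logb 4 B) :=
              (Real.rpow_lt_rpow_left_iff (by norm_num : (1:ℝ) < 4)).2 hk
            rwa [Real.rpow_logb (by norm_num) (by norm_num) hB, Real.rpow_natCast] at h2
          have hgeom : (∑ n ∈ Finset.range m, (4:ℝ)^n) = ((4:ℝ)^m - 1)/3 := by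
            rw [geom_sum_eq (by norm_num)]
            norm_num
          rw [hgeom]
          have h4m : (4:ℝ)^m = 4 * 4^(m-1) := by
            have hm : m - 1 + 1 = m := by omega
            conv_lhs => rw [← hm]
            rw [pow_succ]
            ring
          rw [hB_def] at h4k
          have h2 : (4:ℝ)^(m-1) * c^4 < 4 * y^4 := (lt_div_iff₀ hc4).1 h4k
          rw [div_le_iff₀ (by norm_num : (0:ℝ) < 3), div_mul_eq_mul_div,
            div_mul_eq_mul_div, le_div_iff₀ hc4]
          nlinarith [pow_nonneg hy 4, hc4]
      calc (∑ n ∈ F, (A n).indicator (fun _ => (2:ℝ≥0∞)^(2*n)) ω)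
          ≤ ENNReal.ofReal (∑ n ∈ Finset.range m, (4:ℝ)^n) := step2 ▸ step1
        _ ≤ ENNReal.ofReal (6 / c^4 * y^4) := ENNReal.ofReal_le_ofReal step3
        _ = C * ENNReal.ofReal (y^4) := by
            rw [hC_def, ← ENNReal.ofReal_mul (by positivity)]
    rw [ENNReal.tsum_eq_iSup_sum]
    exact iSup_le hsum
  -- main computation
  have hmeas_ind : ∀ n : ℕ, AEMeasurable (fun ω => (A n).indicator (fun _ => (2:ℝ≥0∞)^(2*n)) ω) μ :=
    fun n => (measurable_const.indicator (hA n)).aemeasurable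
  have key : ∑' n : ℕ, (2:ℝ≥0∞)^(2*n) * μ (A n)
      = ∫⁻ ω, ∑' n : ℕ, (A n).indicator (fun _ => (2:ℝ≥0∞)^(2*n)) ω ∂μ := by
    rw [lintegral_tsum hmeas_ind]
    congr 1
    ext n
    rw [lintegral_indicator_const (hA n)]
  rw [key]
  have hle : ∫⁻ ω, ∑' n : ℕ, (A n).indicator (fun _ => (2:ℝ≥0∞)^(2*n)) ω ∂μ
      ≤ C * ∫⁻ ω, ENNReal.ofReal (Y ω ^ 4) ∂μ := by
    rw [← lintegral_const_mul C ((hYmeas.pow_const 4).ennreal_ofReal)]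
    exact lintegral_mono hpt
  have hfin : ∫⁻ ω, ENNReal.ofReal (Y ω ^ 4) ∂μ < ∞ := by
    have h := hY4.hasFiniteIntegral
    rw [HasFiniteIntegral] at h
    refine lt_of_le_of_lt (lintegral_mono fun ω => ?_) h
    rw [← Real.enorm_eq_ofReal (by positivity : (0:ℝ) ≤ Y ω ^ 4)]

  exact ne_top_of_le_ne_top (by exact (ENNReal.mul_lt_top ENNReal.ofReal_lt_top hfin).ne) hle

/-- if `Y ≥ 0` has finite fourth moment and `σ* > 0`, there is a nonincreasing
sequence `(δ_n)` of positive reals with `δ_n → 0`, `δ_n² √n → ∞`, and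
`Σ_n 2^{2n} P(Y > σ* δ_{2ⁿ} 2^{(n−1)/2}) < ∞`. -/
theorem stmt1 {Ω : Type*} [MeasurableSpace Ω] (μ : Measure Ω) [IsProbabilityMeasure μ]
    (Y : Ω → ℝ) (hYnonneg : ∀ ω, 0 ≤ Y ω) (hYmeas : Measurable Y)
    (hY4 : Integrable (fun ω => Y ω ^ 4) μ)
    (σstar : ℝ) (hσ : 0 < σstar) :
    ∃ δ : ℕ → ℝ, (∀ n, 0 < δ n) ∧ Antitone δ ∧
      Tendsto δ atTop (nhds 0) ∧
      Tendsto (fun n : ℕ => δ n ^ 2 * Real.sqrt n) atTop atTop ∧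
      Summable (fun n : ℕ =>
        (2 : ℝ) ^ (2 * n) *
          (μ {ω | σstar * δ (2 ^ n) * (2 : ℝ) ^ (((n : ℝ) - 1) / 2) < Y ω}).toReal) := by
  set f : ℕ → ℕ → ℝ≥0∞ := fun k n => (2:ℝ≥0∞)^(2*n) *
    μ {ω | σstar * (1/((k:ℝ)+1)) * (2:ℝ)^(((n:ℝ)-1)/2) < Y ω} with hf_def
  have hfin : ∀ k, ∑' n, f k n ≠ ∞ := fun k =>
    stmt1_core μ Y hYnonneg hYmeas hY4 (mul_pos hσ (by positivity))
  have htail : ∀ k : ℕ, ∃ N : ℕ, ∀ i ≥ N, ∑' j, f k (j + i) ≤ (2:ℝ≥0∞)⁻¹^k := by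
    intro k
    have h0 : (0:ℝ≥0∞) < 2⁻¹^k :=
      ENNReal.pow_pos (ENNReal.inv_pos.2 (by norm_num)) k
    have := (ENNReal.tendsto_sum_nat_add _ (hfin k)).eventually_lt_const h0
    rcases eventually_atTop.1 this with ⟨N, hN⟩
    exact ⟨N, fun i hi => (hN i hi).le⟩
  choose N hN using htail
  obtain ⟨φ, hφ0, hφlt, hφ8, hφtail⟩ : ∃ φ : ℕ → ℕ, φ 0 = 0 ∧ (∀ k, φ k < φ (k+1)) ∧
      (∀ k, 8*k ≤ φ k) ∧ (∀ k, 1 ≤ k → ∑' j, f k (j + φ k) ≤ (2:ℝ≥0∞)⁻¹^k) := by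
    refine ⟨fun k => Nat.rec 0 (fun k ih => max (ih + 1) (max (8 * (k+1)) (N (k+1)))) k,
      rfl, ?_, ?_, ?_⟩
    · intro k
      exact lt_of_lt_of_le (Nat.lt_succ_self _) (le_max_left _ _)
    · intro k
      cases k with
      | zero => simp
      | succ k => exact le_trans (le_max_left _ _) (le_max_right _ _)
    · intro k hk
      cases k with
      | zero => omega
      | succ k =>
        exact hN (k+1) _ (le_trans (le_max_right _ _) (le_max_right _ _))
  have hφmono : StrictMono φ := strictMono_nat_of_lt_succ hφlt
  set K : ℕ → ℕ := fun j => Nat.findGreatest (fun k => φ k ≤ j) j with hK_def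
  have hKmono : Monotone K := fun a b hab =>
    Nat.findGreatest_mono (fun k hk => le_trans hk hab) hab
  have hKge : ∀ b j, φ b ≤ j → b ≤ K j := fun b j h =>
    Nat.le_findGreatest (le_trans hφmono.le_apply h) h
  have hφK : ∀ j, φ (K j) ≤ j := by
    intro j
    have h0 : φ 0 ≤ j := by rw [hφ0]; exact Nat.zero_le j
    exact Nat.findGreatest_spec (P := fun k => φ k ≤ j) (Nat.zero_le j) h0
  have hKle : ∀ k j, j < φ (k+1) → K j ≤ k := by
    intro k j h
    by_contra hlt
    push_neg at hlt
    have h1 : φ (k+1) ≤ φ (K j) := hφmono.monotone hlt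
    have h2 := hφK j
    omega
  have hKtop : Tendsto K atTop atTop :=
    tendsto_atTop_atTop.2 fun b => ⟨φ b, fun j hj => hKge b j hj⟩
  have hlogtop : Tendsto (Nat.log 2) atTop atTop := by
    refine tendsto_atTop_atTop.2 fun b => ⟨2^b, fun m hm => ?_⟩
    have hm0 : m ≠ 0 := by
      have : (0:ℕ) < 2^b := Nat.pow_pos (by norm_num)
      omega
    exact (Nat.le_log_iff_pow_le Nat.one_lt_two hm0).2 hm
  have hKL : Tendsto (fun m => K (Nat.log 2 m)) atTop atTop := hKtop.comp hlogtop
  refine ⟨fun m => 1/((K (Nat.log 2 m) : ℝ)+1), fun m => by positivity, ?_, ?_, ?_, ?_⟩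
  · -- Antitone
    intro a b hab
    exact one_div_le_one_div_of_le (by positivity)
      (by exact_mod_cast Nat.succ_le_succ (hKmono (Nat.log_mono_right hab)))
  · -- Tendsto 0
    exact tendsto_one_div_add_atTop_nhds_zero_nat.comp hKL
  · -- growth
    apply tendsto_atTop_mono' atTop (f₁ := fun m => (4:ℝ)^(K (Nat.log 2 m)))
    · filter_upwards [eventually_ge_atTop 1] with m hm1
      set L := Nat.log 2 m with hL_def
      set k := K L with hk_def
      have hL : 8*k ≤ L := le_trans (hφ8 k) (hφK L)
      have h2L : (2:ℕ)^L ≤ m := Nat.pow_log_le_self 2 (by omega)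
      have hmr : ((2:ℝ)^(4*k))^2 ≤ (m:ℝ) := by
        have : (2:ℝ)^(8*k) ≤ (2:ℝ)^L := pow_le_pow_right₀ (by norm_num) hL
        rw [← pow_mul]
        calc (2:ℝ)^(4*k*2) = (2:ℝ)^(8*k) := by ring_nf
          _ ≤ (2:ℝ)^L := this
          _ ≤ (m:ℝ) := by exact_mod_cast h2L
      have hsqrt : (2:ℝ)^(4*k) ≤ Real.sqrt m := by
        have h := Real.sqrt_le_sqrt hmr
        rwa [Real.sqrt_sq (by positivity)] at h
      have hk2 : ((k:ℝ)+1)^2 ≤ (2:ℝ)^(2*k) := by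
        have hn : (k:ℝ)+1 ≤ (2:ℝ)^k := by exact_mod_cast Nat.lt_two_pow_self
        calc ((k:ℝ)+1)^2 ≤ ((2:ℝ)^k)^2 := pow_le_pow_left₀ (by positivity) hn 2
          _ = (2:ℝ)^(2*k) := by rw [← pow_mul]; ring_nf
      have e1 : (1/((k:ℝ)+1))^2 = 1/(((k:ℝ)+1)^2) := by
        rw [div_pow, one_pow]
      show (4:ℝ)^k ≤ (1/((k:ℝ)+1))^2 * Real.sqrt m
      have e2 : (4:ℝ)^k = (1/(2:ℝ)^(2*k)) * (2:ℝ)^(4*k) := by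
        rw [show 4*k = 2*k + 2*k by ring, pow_add, show (4:ℝ) = 2^2 by norm_num,
          ← pow_mul]
        field_simp
      rw [e2, e1]
      apply mul_le_mul (one_div_le_one_div_of_le (by positivity) hk2) hsqrt
        (by positivity) (by positivity)
    · exact (tendsto_pow_atTop_atTop_of_one_lt (by norm_num : (1:ℝ) < 4)).comp hKL
  · -- Summability
    have hδ2 : ∀ n : ℕ, Nat.log 2 (2^n) = n := Nat.log_pow Nat.one_lt_two
    have hfinsum : ∑' n, f (K n) n ≠ ∞ := by
      have hblock : ∀ k, ∑ n ∈ Finset.Ico (φ k) (φ (k+1)), f (K n) n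
          ≤ (if k = 0 then ∑' n, f 0 n else 0) + (2:ℝ≥0∞)⁻¹^k := by
        intro k
        have hKn : ∀ n ∈ Finset.Ico (φ k) (φ (k+1)), K n = k := by
          intro n hn
          rw [Finset.mem_Ico] at hn
          exact le_antisymm (hKle k n hn.2) (hKge k n hn.1)
        rw [Finset.sum_congr rfl (fun n hn => by rw [hKn n hn])]
        rw [Finset.sum_Ico_eq_sum_range]
        have hle : ∑ j ∈ Finset.range (φ (k+1) - φ k), f k (φ k + j)
            ≤ ∑' j, f k (j + φ k) := by
          have := ENNReal.sum_le_tsum (f := fun j => f k (φ k + j))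
            (Finset.range (φ (k+1) - φ k))
          refine le_trans this (le_of_eq (tsum_congr fun j => by rw [add_comm]))
        refine le_trans hle ?_
        cases k with
        | zero =>
          simp only [if_pos rfl]
          refine le_trans (le_of_eq (tsum_congr fun j => by rw [hφ0, add_zero])) ?_
          exact le_add_right le_rfl
        | succ k =>
          rw [if_neg (Nat.succ_ne_zero k), zero_add]
          exact hφtail (k+1) (by omega)
      have hdec : ∀ M, ∑ n ∈ Finset.range (φ M), f (K n) n
          ≤ ∑ k ∈ Finset.range M, ((if k = 0 then ∑' n, f 0 n else 0) + (2:ℝ≥0∞)⁻¹^k) := by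
        intro M
        induction M with
        | zero => rw [hφ0]; simp
        | succ M ih =>
          rw [Finset.sum_range_succ, Finset.range_eq_Ico,
            ← Finset.sum_Ico_consecutive _ (Nat.zero_le (φ M)) (le_of_lt (hφlt M))]
          rw [Finset.range_eq_Ico] at ih
          exact add_le_add ih (hblock M)
      have hbound : ∑' n, f (K n) n ≤ (∑' n, f 0 n) + 2 := by
        rw [ENNReal.tsum_eq_iSup_sum]
        refine iSup_le fun F => ?_
        set M := F.sup id + 1 with hM_def
        have hFsub : F ⊆ Finset.range (φ M) := by
          intro n hn
          refine Finset.mem_range.2 (lt_of_lt_of_le ?_ hφmono.le_apply)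
          exact Nat.lt_succ_of_le (Finset.le_sup (f := id) hn)
        refine le_trans (Finset.sum_le_sum_of_subset hFsub) (le_trans (hdec M) ?_)
        refine le_trans (ENNReal.sum_le_tsum _) (le_of_eq ?_)
        rw [ENNReal.tsum_add, tsum_ite_eq (0:ℕ), ENNReal.tsum_geometric,
          ENNReal.one_sub_inv_two, inv_inv]
      refine ne_top_of_le_ne_top ?_ hbound
      exact (ENNReal.add_lt_top.2 ⟨(hfin 0).lt_top, by norm_num⟩).ne
    have hsummable := ENNReal.summable_toReal hfinsum
    refine hsummable.congr fun n => ?_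
    rw [hf_def]
    simp only [hδ2]
    rw [ENNReal.toReal_mul, ENNReal.toReal_pow, ENNReal.toReal_ofNat]
end

section
/- Let M be a complex (mn)×(mn) matrix viewed as an element of M_m(ℂ)⊗M_n(ℂ), with m×m blocks M_{kl} (1 ≤ k,l ≤ n). Then for any fixed k ∈ {1,…,n}: Σ_{l=1}^n ‖M_{lk}‖² ≤ m·‖M‖² and Σ_{l=1}^n ‖M_{kl}‖² ≤ m·‖M‖². Consequently (1/n)·Σ_{k,l=1}^n ‖M_{kl}‖² ≤ m·‖M‖². -/
open Matrix


/-- The operator (spectral) norm of a square complex matrix, i.e. its norm as an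
operator on the Euclidean space. -/
noncomputable def opNorm {ι : Type*} [Fintype ι] [DecidableEq ι] (M : Matrix ι ι ℂ) : ℝ :=
  ‖Matrix.toEuclideanCLM (𝕜 := ℂ) M‖

/-- The `(k,l)` block (an `m × m` matrix) of a matrix `M ∈ M_m(ℂ) ⊗ M_n(ℂ)`,
identified with a matrix indexed by pairs `(a, k)`, `a ∈ Fin m`, `k ∈ Fin n`. -/
def blk {m n : ℕ} (M : Matrix (Fin m × Fin n) (Fin m × Fin n) ℂ) (k l : Fin n) :
    Matrix (Fin m) (Fin m) ℂ :=
  Matrix.of fun a b => M (a, k) (b, l)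

lemma opNorm_nonneg {ι : Type*} [Fintype ι] [DecidableEq ι] (A : Matrix ι ι ℂ) :
    0 ≤ opNorm A := norm_nonneg _

lemma euclid_norm_sq {ι : Type*} [Fintype ι] (v : ι → ℂ) :
    ‖(WithLp.equiv 2 (ι → ℂ)).symm v‖ ^ 2 = ∑ i, ‖v i‖ ^ 2 := by
  rw [EuclideanSpace.norm_eq, Real.sq_sqrt]
  · rfl
  · positivity

lemma col_sq_le {ι : Type*} [Fintype ι] [DecidableEq ι] (A : Matrix ι ι ℂ) (j : ι) :
    ∑ i, ‖A i j‖ ^ 2 ≤ opNorm A ^ 2 := by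
  have hx : ‖(EuclideanSpace.single j (1 : ℂ) : EuclideanSpace ℂ ι)‖ = 1 := by
    simp [EuclideanSpace.norm_single]
  have h1 : ‖Matrix.toEuclideanCLM (𝕜 := ℂ) A (EuclideanSpace.single j (1 : ℂ))‖ ≤ opNorm A := by
    calc ‖Matrix.toEuclideanCLM (𝕜 := ℂ) A (EuclideanSpace.single j (1 : ℂ))‖
        ≤ opNorm A * ‖(EuclideanSpace.single j (1 : ℂ) : EuclideanSpace ℂ ι)‖ :=
          (Matrix.toEuclideanCLM (𝕜 := ℂ) A).le_opNorm _
      _ = opNorm A := by rw [hx, mul_one]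
  have h2 : Matrix.toEuclideanCLM (𝕜 := ℂ) A (EuclideanSpace.single j (1 : ℂ))
      = (WithLp.equiv 2 (ι → ℂ)).symm (A.mulVec (Pi.single j 1)) := by
    rfl
  have h3 : ∑ i, ‖A i j‖ ^ 2
      = ‖Matrix.toEuclideanCLM (𝕜 := ℂ) A (EuclideanSpace.single j (1 : ℂ))‖ ^ 2 := by
    rw [h2, euclid_norm_sq]
    simp [Matrix.mulVec_single]
  rw [h3]
  exact pow_le_pow_left₀ (norm_nonneg _) h1 2

lemma opNorm_conjTranspose {ι : Type*} [Fintype ι] [DecidableEq ι] (A : Matrix ι ι ℂ) :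
    opNorm Aᴴ = opNorm A := by
  exact Matrix.l2_opNorm_conjTranspose A

lemma row_sq_le {ι : Type*} [Fintype ι] [DecidableEq ι] (A : Matrix ι ι ℂ) (i : ι) :
    ∑ j, ‖A i j‖ ^ 2 ≤ opNorm A ^ 2 := by
  have := col_sq_le Aᴴ i
  rw [opNorm_conjTranspose] at this
  simpa [Matrix.conjTranspose_apply, norm_star] using this

lemma opNorm_sq_le_frob {ι : Type*} [Fintype ι] [DecidableEq ι] (A : Matrix ι ι ℂ) :
    opNorm A ^ 2 ≤ ∑ a, ∑ b, ‖A a b‖ ^ 2 := by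
  have hS : (0:ℝ) ≤ ∑ a, ∑ b, ‖A a b‖ ^ 2 := by positivity
  have key : opNorm A ≤ Real.sqrt (∑ a, ∑ b, ‖A a b‖ ^ 2) := by
    apply ContinuousLinearMap.opNorm_le_bound _ (Real.sqrt_nonneg _)
    intro x
    obtain ⟨v, rfl⟩ := (WithLp.equiv 2 (ι → ℂ)).symm.surjective x
    change ‖(WithLp.equiv 2 (ι → ℂ)).symm (A.mulVec v)‖ ≤ _
    have hx2 : ‖(WithLp.equiv 2 (ι → ℂ)).symm v‖ ^ 2 = ∑ i, ‖v i‖ ^ 2 := euclid_norm_sq v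
    have hmain : ‖(WithLp.equiv 2 (ι → ℂ)).symm (A.mulVec v)‖ ^ 2
        ≤ (∑ a, ∑ b, ‖A a b‖ ^ 2) * ‖(WithLp.equiv 2 (ι → ℂ)).symm v‖ ^ 2 := by
      rw [euclid_norm_sq, hx2, Finset.sum_mul]
      apply Finset.sum_le_sum
      intro a _
      have h1 : ‖A.mulVec v a‖ ≤ ∑ b, ‖A a b‖ * ‖v b‖ := by
        refine (norm_sum_le _ _).trans_eq ?_
        simp [Matrix.mulVec, dotProduct]
      calc ‖A.mulVec v a‖ ^ 2 ≤ (∑ b, ‖A a b‖ * ‖v b‖) ^ 2 :=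
            pow_le_pow_left₀ (norm_nonneg _) h1 2
        _ ≤ (∑ b, ‖A a b‖ ^ 2) * ∑ b, ‖v b‖ ^ 2 :=
            Finset.sum_mul_sq_le_sq_mul_sq _ _ _
    have h := Real.sqrt_le_sqrt hmain
    rwa [Real.sqrt_sq (norm_nonneg _), Real.sqrt_mul hS, Real.sqrt_sq (norm_nonneg _)] at h
  calc opNorm A ^ 2 ≤ Real.sqrt (∑ a, ∑ b, ‖A a b‖ ^ 2) ^ 2 :=
        pow_le_pow_left₀ (opNorm_nonneg _) key 2
    _ = _ := Real.sq_sqrt hS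

/-- for any fixed `k`, `Σ_l ‖M_{lk}‖² ≤ m ‖M‖²` and `Σ_l ‖M_{kl}‖² ≤ m ‖M‖²`;
consequently `(1/n) Σ_{k,l} ‖M_{kl}‖² ≤ m ‖M‖²`. -/
theorem stmt5 {m n : ℕ} (M : Matrix (Fin m × Fin n) (Fin m × Fin n) ℂ) :
    (∀ k : Fin n, ∑ l : Fin n, opNorm (blk M l k) ^ 2 ≤ (m : ℝ) * opNorm M ^ 2) ∧
    (∀ k : Fin n, ∑ l : Fin n, opNorm (blk M k l) ^ 2 ≤ (m : ℝ) * opNorm M ^ 2) ∧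
    (1 / (n : ℝ)) * ∑ k : Fin n, ∑ l : Fin n, opNorm (blk M k l) ^ 2
      ≤ (m : ℝ) * opNorm M ^ 2 := by
  have hcol : ∀ k : Fin n, ∑ l : Fin n, opNorm (blk M l k) ^ 2 ≤ (m : ℝ) * opNorm M ^ 2 := by
    intro k
    calc ∑ l : Fin n, opNorm (blk M l k) ^ 2
        ≤ ∑ l : Fin n, ∑ a : Fin m, ∑ b : Fin m, ‖M (a, l) (b, k)‖ ^ 2 :=
          Finset.sum_le_sum fun l _ => opNorm_sq_le_frob (blk M l k)
      _ = ∑ b : Fin m, ∑ p : Fin m × Fin n, ‖M p (b, k)‖ ^ 2 := by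
          simp_rw [Fintype.sum_prod_type]
          rw [Finset.sum_comm, Finset.sum_congr rfl fun a _ => Finset.sum_comm,
            Finset.sum_comm]
      _ ≤ ∑ _b : Fin m, opNorm M ^ 2 := by
          refine Finset.sum_le_sum fun b _ => ?_
          simpa using col_sq_le M (b, k)
      _ = (m : ℝ) * opNorm M ^ 2 := by simp [mul_comm]
  have hrow : ∀ k : Fin n, ∑ l : Fin n, opNorm (blk M k l) ^ 2 ≤ (m : ℝ) * opNorm M ^ 2 := by
    intro k
    calc ∑ l : Fin n, opNorm (blk M k l) ^ 2
        ≤ ∑ l : Fin n, ∑ a : Fin m, ∑ b : Fin m, ‖M (a, k) (b, l)‖ ^ 2 :=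
          Finset.sum_le_sum fun l _ => opNorm_sq_le_frob (blk M k l)
      _ = ∑ a : Fin m, ∑ p : Fin m × Fin n, ‖M (a, k) p‖ ^ 2 := by
          simp_rw [Fintype.sum_prod_type]
          rw [Finset.sum_comm]
          exact Finset.sum_congr rfl fun a _ => Finset.sum_comm
      _ ≤ ∑ _a : Fin m, opNorm M ^ 2 := by
          refine Finset.sum_le_sum fun a _ => ?_
          simpa using row_sq_le M (a, k)
      _ = (m : ℝ) * opNorm M ^ 2 := by simp [mul_comm]
  refine ⟨hcol, hrow, ?_⟩
  rcases Nat.eq_zero_or_pos n with hn | hn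
  · subst hn; simp; positivity
  · rw [div_mul_eq_mul_div, one_mul, div_le_iff₀ (by exact_mod_cast hn)]
    calc ∑ k : Fin n, ∑ l : Fin n, opNorm (blk M k l) ^ 2
        ≤ ∑ _k : Fin n, (m : ℝ) * opNorm M ^ 2 := Finset.sum_le_sum fun k _ => hrow k
      _ = (m : ℝ) * opNorm M ^ 2 * n := by simp [mul_comm]
end

section
/- Let γ, α_1, …, α_r, β_1, …, β_t be Hermitian m×m matrices, let A^{(1)}, …, A^{(t)} be Hermitian n×n matrices, and on a probability space let X^{(1)}, …, X^{(r)} be measurable random n×n Hermitian matrices. Set S = γ⊗I_n + Σ_{v=1}^r α_v⊗(X^{(v)}/√n) + Σ_{u=1}^t β_u⊗A^{(u)}. For λ ∈ M_m(ℂ) with Im(λ) positive definite, let H(λ) = (id_m⊗tr_n)( (λ⊗I_n − S)^{-1} ) and G(λ) = E[H(λ)] ∈ M_m(ℂ) (the expectation is well defined since ‖H(λ)‖ ≤ ‖(Im λ)^{-1}‖ almost surely). Then the matrix (λ − γ − Σ_{v=1}^r α_v·G(λ)·α_v)⊗I_n − Σ_{u=1}^t β_u⊗A^{(u)} is invertible,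 and its inverse Y(λ) satisfies ‖Y(λ)‖ ≤ ‖(Im λ)^{-1}‖. -/
open MeasureTheory
open scoped Kronecker ComplexOrder

/-- The imaginary part `(T - T*) / (2i)` of a square complex matrix. -/
noncomputable def imPart {ι : Type*} (T : Matrix ι ι ℂ) : Matrix ι ι ℂ :=
  (2 * Complex.I)⁻¹ • (T - T.conjTranspose)

/-- The normalized partial trace `(id_m ⊗ tr_n)(M) = (1/n) Σ_k M_{kk}`. -/
noncomputable def partialTrace {m n : ℕ} (M : Matrix (Fin m × Fin n) (Fin m × Fin n) ℂ) :
    Matrix (Fin m) (Fin m) ℂ :=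
  ((n : ℂ))⁻¹ • ∑ k : Fin n, blk M k k


namespace Stmt9Aux
open Matrix

variable {ι : Type*} [Fintype ι] [DecidableEq ι]

noncomputable def ev (x : ι → ℂ) : EuclideanSpace ℂ ι := (WithLp.equiv 2 (ι → ℂ)).symm x

lemma ev_mulVec (M : Matrix ι ι ℂ) (x : ι → ℂ) :
    Matrix.toEuclideanCLM (𝕜 := ℂ) M (ev x) = ev (M *ᵥ x) := by
  rfl

lemma dot_eq_inner (x y : ι → ℂ) : star x ⬝ᵥ y = inner ℂ (ev x) (ev y) := by
  rw [dotProduct_comm]; rfl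

lemma abs_dot_le (x y : ι → ℂ) : ‖star x ⬝ᵥ y‖ ≤ ‖ev x‖ * ‖ev y‖ := by
  rw [dot_eq_inner]; exact norm_inner_le_norm _ _

lemma norm_mulVec_le (M : Matrix ι ι ℂ) (x : ι → ℂ) :
    ‖ev (M *ᵥ x)‖ ≤ opNorm M * ‖ev x‖ := by
  rw [← ev_mulVec]; exact (Matrix.toEuclideanCLM (𝕜 := ℂ) M).le_opNorm _

lemma quad_conj (M : Matrix ι ι ℂ) (x : ι → ℂ) :
    star x ⬝ᵥ Mᴴ *ᵥ x = starRingEnd ℂ (star x ⬝ᵥ M *ᵥ x) := by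
  have h1 : starRingEnd ℂ (star x ⬝ᵥ M *ᵥ x) = star (star x ⬝ᵥ M *ᵥ x) := rfl
  rw [h1, ← Matrix.star_dotProduct_star, star_star, Matrix.star_mulVec,
    ← Matrix.dotProduct_mulVec]

lemma quad_im_zero {M : Matrix ι ι ℂ} (hM : M.IsHermitian) (x : ι → ℂ) :
    (star x ⬝ᵥ M *ᵥ x).im = 0 := by
  have := quad_conj M x
  rw [hM.eq] at this
  exact Complex.conj_eq_iff_im.mp this.symm

lemma quad_imPart (M : Matrix ι ι ℂ) (x : ι → ℂ) :
    star x ⬝ᵥ imPart M *ᵥ x = ((star x ⬝ᵥ M *ᵥ x).im : ℂ) := by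
  rw [imPart, Matrix.smul_mulVec, dotProduct_smul, Matrix.sub_mulVec,
    dotProduct_sub, quad_conj, smul_eq_mul]
  set q := star x ⬝ᵥ M *ᵥ x
  rw [Complex.sub_conj]
  field_simp
  push_cast
  ring

end Stmt9Aux

namespace Stmt9Aux
open Matrix
set_option linter.unusedSectionVars false

variable {ι : Type*} [Fintype ι] [DecidableEq ι]

lemma ev_norm_sq (x : ι → ℂ) : (‖ev x‖ : ℂ) ^ 2 = star x ⬝ᵥ x := by
  rw [dot_eq_inner]
  exact (inner_self_eq_norm_sq_to_K (𝕜 := ℂ) (ev x)).symm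

/-- Key coercivity lemma: a matrix whose quadratic form has imaginary part bounded
below by `c‖x‖²` is invertible with inverse of norm at most `c⁻¹`. -/
lemma unit_and_bound (T : Matrix ι ι ℂ) {c : ℝ} (hc : 0 < c)
    (h : ∀ x : ι → ℂ, c * ‖ev x‖ ^ 2 ≤ (star x ⬝ᵥ T *ᵥ x).im) :
    IsUnit T ∧ opNorm T⁻¹ ≤ c⁻¹ := by
  have key : ∀ x : ι → ℂ, c * ‖ev x‖ ≤ ‖ev (T *ᵥ x)‖ := by
    intro x
    rcases eq_or_ne (‖ev x‖) 0 with h0 | h0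
    · rw [h0, mul_zero]; exact norm_nonneg _
    have h1 : c * ‖ev x‖ ^ 2 ≤ ‖star x ⬝ᵥ T *ᵥ x‖ := by
      refine (h x).trans ?_
      calc (star x ⬝ᵥ T *ᵥ x).im ≤ |(star x ⬝ᵥ T *ᵥ x).im| := le_abs_self _
        _ ≤ ‖star x ⬝ᵥ T *ᵥ x‖ := Complex.abs_im_le_norm _
        _ = ‖star x ⬝ᵥ T *ᵥ x‖ := rfl
    have h2 := abs_dot_le x (T *ᵥ x)
    have h3 : c * ‖ev x‖ ^ 2 ≤ ‖ev x‖ * ‖ev (T *ᵥ x)‖ := h1.trans h2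
    have hpos : 0 < ‖ev x‖ := lt_of_le_of_ne (norm_nonneg _) (Ne.symm h0)
    nlinarith [norm_nonneg (ev (T *ᵥ x))]
  have hinj : Function.Injective T.mulVec := by
    intro a b hab
    have hz : T *ᵥ (a - b) = 0 := by rw [Matrix.mulVec_sub, hab, sub_self]
    have h2 := key (a - b)
    rw [hz] at h2
    have hev0 : ev (0 : ι → ℂ) = 0 := rfl
    rw [hev0, norm_zero] at h2
    have h3 : ‖ev (a - b)‖ = 0 :=
      le_antisymm (nonpos_of_mul_nonpos_right h2 hc |>.trans_eq rfl) (norm_nonneg _)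
    have h4 : ev (a - b) = 0 := norm_le_zero_iff.mp h3.le
    have h5 : a - b = 0 := (WithLp.equiv 2 (ι → ℂ)).symm.injective h4
    exact sub_eq_zero.mp h5
  have hunit : IsUnit T := Matrix.mulVec_injective_iff_isUnit.mp hinj
  have hdet : IsUnit T.det := (Matrix.isUnit_iff_isUnit_det T).mp hunit
  refine ⟨hunit, ?_⟩
  rw [opNorm]
  refine ContinuousLinearMap.opNorm_le_bound _ (by positivity) fun z => ?_
  set y : ι → ℂ := WithLp.equiv 2 (ι → ℂ) z with hy
  have hzy : z = ev y := rfl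
  rw [hzy, ev_mulVec]
  set x : ι → ℂ := T⁻¹ *ᵥ y with hx
  have hTx : T *ᵥ x = y := by
    rw [hx, Matrix.mulVec_mulVec, Matrix.mul_nonsing_inv T hdet, Matrix.one_mulVec]
  have h6 := key x
  rw [hTx] at h6
  rw [le_inv_mul_iff₀ hc]
  linarith
end Stmt9Aux

namespace Stmt9Aux
open Matrix
set_option linter.unusedSectionVars false
variable {ι : Type*} [Fintype ι] [DecidableEq ι]

set_option synthInstance.maxHeartbeats 1000000
set_option maxHeartbeats 1000000

lemma opNorm_pos [Nonempty ι] {M : Matrix ι ι ℂ} (hM : M ≠ 0) : 0 < opNorm M := by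
  rw [opNorm, norm_pos_iff]
  intro h0
  exact hM (by simpa using (Matrix.toEuclideanCLM (𝕜 := ℂ)).injective (h0.trans (map_zero _).symm))

/-- For a positive definite `P`, the quadratic form is bounded below by `‖P⁻¹‖⁻¹ ‖x‖²`. -/
lemma posdef_lower [Nonempty ι] {P : Matrix ι ι ℂ} (hP : P.PosDef) (x : ι → ℂ) :
    (opNorm P⁻¹)⁻¹ * ‖ev x‖ ^ 2 ≤ (star x ⬝ᵥ P *ᵥ x).re := by
  have hPsd := hP.posSemidef
  open scoped MatrixOrder in
  set Q := CFC.sqrt P with hQdef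
  have hQ : Q * Q = P := by open scoped MatrixOrder in exact CFC.sqrt_mul_sqrt_self P hPsd.nonneg
  have hQh : Q.IsHermitian := by open scoped MatrixOrder in exact (CFC.sqrt_nonneg P).posSemidef.1
  have hPdet : IsUnit P.det := (Matrix.isUnit_iff_isUnit_det P).mp hP.isUnit
  have hQdet : IsUnit Q.det := by
    have : IsUnit (Q.det * Q.det) := by rwa [← Matrix.det_mul, hQ]
    exact isUnit_of_mul_isUnit_left this
  set z : ι → ℂ := Q *ᵥ x with hz
  have hquad : star x ⬝ᵥ P *ᵥ x = star z ⬝ᵥ z := by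
    rw [← hQ, ← Matrix.mulVec_mulVec, Matrix.dotProduct_mulVec]
    congr 1
    rw [← hQh.eq, ← Matrix.star_mulVec]
  have hre : (star x ⬝ᵥ P *ᵥ x).re = ‖ev z‖ ^ 2 := by
    rw [hquad, ← ev_norm_sq, ← Complex.ofReal_pow, Complex.ofReal_re]
  have hx : x = Q⁻¹ *ᵥ z := by
    rw [hz, Matrix.mulVec_mulVec, Matrix.nonsing_inv_mul Q hQdet, Matrix.one_mulVec]
  have hxle : ‖ev x‖ ≤ opNorm Q⁻¹ * ‖ev z‖ := by
    rw [hx]; exact norm_mulVec_le _ _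
  have hnorm : opNorm Q⁻¹ ^ 2 = opNorm P⁻¹ := by
    have h1 : star (Matrix.toEuclideanCLM (𝕜 := ℂ) Q⁻¹) = Matrix.toEuclideanCLM (𝕜 := ℂ) Q⁻¹ := by
      rw [← map_star]
      congr 1
      rw [Matrix.star_eq_conjTranspose, Matrix.conjTranspose_nonsing_inv, hQh.eq]
    have h2 : opNorm Q⁻¹ * opNorm Q⁻¹ = opNorm (Q⁻¹ * Q⁻¹) := by
      rw [opNorm, opNorm]
      simp only [_root_.map_mul]
      calc ‖Matrix.toEuclideanCLM (𝕜 := ℂ) Q⁻¹‖ * ‖Matrix.toEuclideanCLM (𝕜 := ℂ) Q⁻¹‖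
          = ‖star (Matrix.toEuclideanCLM (𝕜 := ℂ) Q⁻¹) * Matrix.toEuclideanCLM (𝕜 := ℂ) Q⁻¹‖ :=
            CStarRing.norm_star_mul_self.symm
        _ = _ := by rw [h1]
    rw [sq, h2, ← Matrix.mul_inv_rev, hQ]
  have hPinv0 : (P⁻¹ : Matrix ι ι ℂ) ≠ 0 := by
    intro h0
    have := Matrix.nonsing_inv_mul P hPdet
    rw [h0, Matrix.zero_mul] at this
    exact zero_ne_one (α := ℂ) (by simpa using congrFun (congrFun this (Classical.arbitrary ι)) (Classical.arbitrary ι))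
  have hop : 0 < opNorm P⁻¹ := opNorm_pos hPinv0
  rw [hre, inv_mul_le_iff₀ hop, ← hnorm]
  nlinarith [norm_nonneg (ev x), norm_nonneg (ev z), mul_le_mul_of_nonneg_left hxle
    (norm_nonneg (Matrix.toEuclideanCLM (𝕜 := ℂ) Q⁻¹))]
end Stmt9Aux

namespace Stmt9Aux
open Matrix
set_option linter.unusedSectionVars false
variable {ι : Type*} [Fintype ι] [DecidableEq ι]

lemma quad_sum {κ : Type*} (s : Finset κ) (M : κ → Matrix ι ι ℂ) (x : ι → ℂ) :
    star x ⬝ᵥ (∑ v ∈ s, M v) *ᵥ x = ∑ v ∈ s, star x ⬝ᵥ (M v) *ᵥ x := by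
  classical
  induction s using Finset.induction_on with
  | empty => simp
  | insert a s h ih =>
    rw [Finset.sum_insert h, Finset.sum_insert h, Matrix.add_mulVec, dotProduct_add, ih]

lemma quad_kron_one {m n : ℕ} (Q : Matrix (Fin m) (Fin m) ℂ) (x : Fin m × Fin n → ℂ) :
    star x ⬝ᵥ (Q ⊗ₖ (1 : Matrix (Fin n) (Fin n) ℂ)) *ᵥ x
      = ∑ k : Fin n, star (fun a => x (a, k)) ⬝ᵥ Q *ᵥ fun a => x (a, k) := by
  simp only [dotProduct, Matrix.mulVec, Pi.star_apply]
  rw [Fintype.sum_prod_type]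
  rw [Finset.sum_comm]
  refine Finset.sum_congr rfl fun k _ => Finset.sum_congr rfl fun a _ => ?_
  rw [Finset.mul_sum]
  rw [Fintype.sum_prod_type]
  simp only [Matrix.kroneckerMap_apply, Matrix.one_apply, mul_ite, mul_zero, ite_mul, zero_mul,
    Finset.sum_ite_eq', Finset.mem_univ, if_true, Finset.mul_sum]
  rw [Finset.sum_comm]
  simp [Finset.sum_ite_eq', mul_comm, mul_left_comm, mul_assoc]

lemma ev_prod_norm_sq {m n : ℕ} (x : Fin m × Fin n → ℂ) :
    ‖ev x‖ ^ 2 = ∑ k : Fin n, ‖ev fun a => x (a, k)‖ ^ 2 := by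
  have h : ∀ {κ : Type} [Fintype κ] (y : κ → ℂ), ‖ev y‖ ^ 2 = ∑ i, ‖y i‖ ^ 2 := by
    intro κ _ y
    rw [EuclideanSpace.norm_eq, Real.sq_sqrt (Finset.sum_nonneg fun i _ => sq_nonneg _)]
    rfl
  rw [h x]
  rw [Fintype.sum_prod_type_right]
  exact Finset.sum_congr rfl fun k _ => by rw [h]

lemma entry_le_opNorm (M : Matrix ι ι ℂ) (i j : ι) : ‖M i j‖ ≤ opNorm M := by
  have h1 : M i j = star (Pi.single i 1) ⬝ᵥ M *ᵥ Pi.single j 1 := by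
    simp [dotProduct, Matrix.mulVec, Pi.single_apply, Finset.sum_ite_eq',
      apply_ite (star : ℂ → ℂ)]
  have h2 := abs_dot_le (Pi.single i (1:ℂ)) (M *ᵥ Pi.single j 1)
  have h3 := norm_mulVec_le M (Pi.single j (1:ℂ))
  have h4 : ∀ a : ι, ‖ev (Pi.single a (1:ℂ))‖ = 1 := by
    intro a
    have : ev (Pi.single a (1:ℂ)) = EuclideanSpace.single a (1:ℂ) := rfl
    rw [this, EuclideanSpace.norm_single, norm_one]
  rw [h4, one_mul] at h2
  rw [h4, mul_one] at h3
  rw [h1]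
  exact h2.trans h3

lemma kron_isHermitian {m n : ℕ} {P : Matrix (Fin m) (Fin m) ℂ} {B : Matrix (Fin n) (Fin n) ℂ}
    (hP : P.IsHermitian) (hB : B.IsHermitian) : (P ⊗ₖ B).IsHermitian := by
  ext ⟨a, k⟩ ⟨b, l⟩
  simp only [Matrix.conjTranspose_apply, Matrix.kroneckerMap_apply, star_mul']
  rw [← Matrix.conjTranspose_apply P, ← Matrix.conjTranspose_apply B, hP.eq, hB.eq]

lemma measurable_det {Ω : Type*} [MeasurableSpace Ω] {f : Ω → Matrix ι ι ℂ}
    (hf : ∀ i j, Measurable fun ω => f ω i j) : Measurable fun ω => (f ω).det := by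
  simp only [Matrix.det_apply']
  exact Finset.measurable_sum _ fun σ _ =>
    (Finset.measurable_prod _ fun i _ => hf _ _).const_mul _

lemma measurable_inv_entry {Ω : Type*} [MeasurableSpace Ω] {f : Ω → Matrix ι ι ℂ}
    (hf : ∀ i j, Measurable fun ω => f ω i j) (i j : ι) :
    Measurable fun ω => (f ω)⁻¹ i j := by
  simp only [Matrix.inv_def, Matrix.smul_apply, smul_eq_mul, Ring.inverse_eq_inv']
  refine ((measurable_det hf).inv).mul ?_
  simp only [Matrix.adjugate_apply]
  refine measurable_det fun a b => ?_
  simp only [Matrix.updateRow_apply]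
  by_cases h : a = j <;> simp [h, hf a b]
end Stmt9Aux

namespace Stmt9Aux
open Matrix
set_option linter.unusedSectionVars false

lemma quad_blk {m n : ℕ} (M : Matrix (Fin m × Fin n) (Fin m × Fin n) ℂ) (k : Fin n)
    (y : Fin m → ℂ) :
    star y ⬝ᵥ (_root_.blk M k k) *ᵥ y
      = star (fun p : Fin m × Fin n => if p.2 = k then y p.1 else 0) ⬝ᵥ
          M *ᵥ (fun p : Fin m × Fin n => if p.2 = k then y p.1 else 0) := by
  have inner : ∀ (p : Fin m × Fin n),
      (∑ q : Fin m × Fin n, M p q * if q.2 = k then y q.1 else 0)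
        = ∑ b, M p (b, k) * y b := by
    intro p
    rw [Fintype.sum_prod_type]
    simp only [mul_ite, mul_zero]
    rw [Finset.sum_comm]
    simp only [Finset.sum_ite_irrel, Finset.sum_const_zero]
    rw [Finset.sum_ite_eq' Finset.univ k]
    simp
  simp only [dotProduct, Matrix.mulVec, Pi.star_apply, _root_.blk, Matrix.of_apply,
    dotProduct]
  simp_rw [inner]
  rw [Fintype.sum_prod_type]
  simp only [apply_ite (star : ℂ → ℂ), star_zero, ite_mul, zero_mul]
  rw [Finset.sum_comm]
  simp only [Finset.sum_ite_irrel, Finset.sum_const_zero]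
  rw [Finset.sum_ite_eq' Finset.univ k]
  simp

end Stmt9Aux


open Stmt9Aux Matrix in
set_option maxHeartbeats 1000000 in
/-- with `S = γ⊗Iₙ + Σ_v α_v⊗(X⁽ᵛ⁾/√n) + Σ_u β_u⊗A⁽ᵘ⁾`,
`H(λ) = (id_m⊗tr_n)((λ⊗Iₙ − S)⁻¹)` and `G(λ) = E[H(λ)]` (entrywise expectation,
i.e. the Bochner integral), the matrix
`(λ − γ − Σ_v α_v G(λ) α_v)⊗Iₙ − Σ_u β_u⊗A⁽ᵘ⁾` is invertible and its inverse `Y(λ)`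
satisfies `‖Y(λ)‖ ≤ ‖(Im λ)⁻¹‖`. -/
theorem stmt9 {m n r t : ℕ} (hn : 0 < n)
    {Ω : Type*} [MeasurableSpace Ω] (μ : Measure Ω) [IsProbabilityMeasure μ]
    (γ : Matrix (Fin m) (Fin m) ℂ) (hγ : γ.IsHermitian)
    (α : Fin r → Matrix (Fin m) (Fin m) ℂ) (hα : ∀ v, (α v).IsHermitian)
    (β : Fin t → Matrix (Fin m) (Fin m) ℂ) (hβ : ∀ u, (β u).IsHermitian)
    (A : Fin t → Matrix (Fin n) (Fin n) ℂ) (hA : ∀ u, (A u).IsHermitian)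
    (X : Fin r → Ω → Matrix (Fin n) (Fin n) ℂ)
    (hXmeas : ∀ v i j, Measurable fun ω => X v ω i j)
    (hXherm : ∀ v ω, (X v ω).IsHermitian)
    (lam : Matrix (Fin m) (Fin m) ℂ) (hlam : (imPart lam).PosDef)
    (S : Ω → Matrix (Fin m × Fin n) (Fin m × Fin n) ℂ)
    (hS : ∀ ω, S ω = γ ⊗ₖ (1 : Matrix (Fin n) (Fin n) ℂ)
        + ∑ v, α v ⊗ₖ (((Real.sqrt n : ℂ))⁻¹ • X v ω)
        + ∑ u, β u ⊗ₖ A u)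
    (G : Matrix (Fin m) (Fin m) ℂ)
    (hG : G = Matrix.of fun i j =>
        ∫ ω, partialTrace ((lam ⊗ₖ (1 : Matrix (Fin n) (Fin n) ℂ) - S ω)⁻¹) i j ∂μ) :
    IsUnit ((lam - γ - ∑ v, α v * G * α v) ⊗ₖ (1 : Matrix (Fin n) (Fin n) ℂ)
        - ∑ u, β u ⊗ₖ A u) ∧
    opNorm (((lam - γ - ∑ v, α v * G * α v) ⊗ₖ (1 : Matrix (Fin n) (Fin n) ℂ)
        - ∑ u, β u ⊗ₖ A u)⁻¹) ≤ opNorm ((imPart lam)⁻¹) := by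
  classical
  rcases Nat.eq_zero_or_pos m with hm | hm
  · subst hm
    haveI hsub : Subsingleton (Matrix (Fin 0 × Fin n) (Fin 0 × Fin n) ℂ) :=
      ⟨fun M N => by ext ⟨i, k⟩ j; exact i.elim0⟩
    refine ⟨isUnit_of_subsingleton _, ?_⟩
    have h0 : ∀ M : Matrix (Fin 0 × Fin n) (Fin 0 × Fin n) ℂ,
        Matrix.toEuclideanCLM (𝕜 := ℂ) M = 0 := by
      intro M
      refine ContinuousLinearMap.ext fun z => ?_
      apply (WithLp.equiv 2 (Fin 0 × Fin n → ℂ)).injective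
      funext p
      exact p.1.elim0
    rw [opNorm, h0, norm_zero]
    exact norm_nonneg _
  haveI : Nonempty (Fin m) := Fin.pos_iff_nonempty.mp hm
  set C := opNorm ((imPart lam)⁻¹) with hCdef
  have hlamdet : IsUnit (imPart lam).det := (Matrix.isUnit_iff_isUnit_det _).mp hlam.isUnit
  have hne : (imPart lam)⁻¹ ≠ 0 := by
    intro h0
    have h1 := Matrix.nonsing_inv_mul _ hlamdet
    rw [h0, Matrix.zero_mul] at h1
    exact zero_ne_one (α := ℂ)
      (by simpa using congrFun (congrFun h1 (Classical.arbitrary _)) (Classical.arbitrary _))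
  have hCpos : 0 < C := opNorm_pos hne
  set c := C⁻¹ with hcdef
  have hc : 0 < c := inv_pos.mpr hCpos
  -- lower bound for the quadratic form of `lam` on ℂ^m
  have hmlow : ∀ y : Fin m → ℂ, c * ‖ev y‖ ^ 2 ≤ (star y ⬝ᵥ lam *ᵥ y).im := by
    intro y
    have h1 := posdef_lower hlam y
    rw [quad_imPart lam y, Complex.ofReal_re] at h1
    exact h1
  -- S ω is Hermitian
  have hSherm : ∀ ω, (S ω).IsHermitian := by
    intro ω
    rw [hS ω]
    have h1 : (∑ v, α v ⊗ₖ (((Real.sqrt n : ℂ))⁻¹ • X v ω)).IsHermitian := by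
      show _ᴴ = _
      rw [Matrix.conjTranspose_sum]
      refine Finset.sum_congr rfl fun v _ => ?_
      refine kron_isHermitian (hα v) ?_
      show _ᴴ = _
      rw [Matrix.conjTranspose_smul, (hXherm v ω).eq]
      congr 1
      simp [Complex.star_def, Complex.conj_ofReal]
    exact ((kron_isHermitian hγ isHermitian_one).add h1).add
      (by show _ᴴ = _
          rw [Matrix.conjTranspose_sum]
          exact Finset.sum_congr rfl fun u _ => kron_isHermitian (hβ u) (hA u))
  -- coercivity for the resolvent matrix at each ω
  have hTlow : ∀ ω (x : Fin m × Fin n → ℂ),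
      c * ‖ev x‖ ^ 2 ≤ (star x ⬝ᵥ (lam ⊗ₖ (1 : Matrix (Fin n) (Fin n) ℂ) - S ω) *ᵥ x).im := by
    intro ω x
    rw [Matrix.sub_mulVec, dotProduct_sub, Complex.sub_im, quad_im_zero (hSherm ω),
      sub_zero, quad_kron_one, Complex.im_sum, ev_prod_norm_sq, Finset.mul_sum]
    exact Finset.sum_le_sum fun k _ => hmlow _
  have hTfacts : ∀ ω, IsUnit (lam ⊗ₖ (1 : Matrix (Fin n) (Fin n) ℂ) - S ω) ∧
      opNorm (lam ⊗ₖ (1 : Matrix (Fin n) (Fin n) ℂ) - S ω)⁻¹ ≤ c⁻¹ :=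
    fun ω => unit_and_bound _ hc (hTlow ω)
  -- quadratic form of resolvent has nonpositive imaginary part
  have hresim : ∀ ω (y : Fin m × Fin n → ℂ),
      (star y ⬝ᵥ (lam ⊗ₖ (1 : Matrix (Fin n) (Fin n) ℂ) - S ω)⁻¹ *ᵥ y).im ≤ 0 := by
    intro ω y
    set T := lam ⊗ₖ (1 : Matrix (Fin n) (Fin n) ℂ) - S ω with hTdef
    have hdet := (Matrix.isUnit_iff_isUnit_det _).mp (hTfacts ω).1
    set z := T⁻¹ *ᵥ y with hzdef
    have hTz : T *ᵥ z = y := by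
      rw [hzdef, Matrix.mulVec_mulVec, Matrix.mul_nonsing_inv _ hdet, Matrix.one_mulVec]
    have e : star y ⬝ᵥ z = star z ⬝ᵥ Tᴴ *ᵥ z := by
      rw [← hTz, Matrix.star_mulVec, ← Matrix.dotProduct_mulVec]
    have e2 : star y ⬝ᵥ T⁻¹ *ᵥ y = starRingEnd ℂ (star z ⬝ᵥ T *ᵥ z) := by
      rw [← hzdef, e, quad_conj]
    rw [e2, Complex.conj_im]
    have h3 := hTlow ω z
    nlinarith [sq_nonneg (‖ev z‖), norm_nonneg (ev z)]
  -- the averaged resolvent H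
  set Hfun : Ω → Matrix (Fin m) (Fin m) ℂ :=
    fun ω => partialTrace ((lam ⊗ₖ (1 : Matrix (Fin n) (Fin n) ℂ) - S ω)⁻¹) with hHdef
  -- measurability of entries
  have hSmeas : ∀ p q : Fin m × Fin n, Measurable fun ω => S ω p q := by
    rintro ⟨a, k⟩ ⟨b, l⟩
    simp only [hS, Matrix.add_apply, Matrix.sum_apply, Matrix.kroneckerMap_apply,
      Matrix.smul_apply, smul_eq_mul]
    refine (measurable_const.add (Finset.measurable_sum _ fun v _ => ?_)).add measurable_const
    exact ((hXmeas v k l).const_mul _).const_mul _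
  have hTmeas : ∀ p q : Fin m × Fin n,
      Measurable fun ω => (lam ⊗ₖ (1 : Matrix (Fin n) (Fin n) ℂ) - S ω) p q := by
    intro p q
    simp only [Matrix.sub_apply]
    exact (hSmeas p q).const_sub _
  have hHmeas : ∀ i j : Fin m, Measurable fun ω => Hfun ω i j := by
    intro i j
    simp only [hHdef, partialTrace, Matrix.smul_apply, Matrix.sum_apply, blk, Matrix.of_apply,
      smul_eq_mul]
    exact (Finset.measurable_sum _ fun k _ =>
      measurable_inv_entry hTmeas (i, k) (j, k)).const_mul _
  -- boundedness of entries
  have hHbdd : ∀ ω (i j : Fin m), ‖Hfun ω i j‖ ≤ C := by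
    intro ω i j
    have hB : opNorm (lam ⊗ₖ (1 : Matrix (Fin n) (Fin n) ℂ) - S ω)⁻¹ ≤ C := by
      have := (hTfacts ω).2
      rwa [hcdef, inv_inv] at this
    have e1 : Hfun ω i j = (n : ℂ)⁻¹ *
        ∑ k : Fin n, (lam ⊗ₖ (1 : Matrix (Fin n) (Fin n) ℂ) - S ω)⁻¹ (i, k) (j, k) := by
      simp [hHdef, partialTrace, Matrix.smul_apply, Matrix.sum_apply, blk, Matrix.of_apply]
    rw [e1, norm_mul]
    have e2 : ‖((n : ℂ))⁻¹‖ = (n : ℝ)⁻¹ := by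
      rw [norm_inv]
      norm_num
    rw [e2]
    have e3 : ‖∑ k : Fin n, (lam ⊗ₖ (1 : Matrix (Fin n) (Fin n) ℂ) - S ω)⁻¹ (i, k) (j, k)‖
        ≤ (n : ℝ) * C := by
      refine (norm_sum_le _ _).trans ?_
      refine (Finset.sum_le_sum fun k _ => (entry_le_opNorm _ (i, k) (j, k)).trans hB).trans_eq ?_
      simp [Finset.sum_const, mul_comm]
    calc (n : ℝ)⁻¹ * ‖∑ k : Fin n, (lam ⊗ₖ (1 : Matrix (Fin n) (Fin n) ℂ) - S ω)⁻¹ (i, k) (j, k)‖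
        ≤ (n : ℝ)⁻¹ * ((n : ℝ) * C) := by
          refine mul_le_mul_of_nonneg_left e3 (by positivity)
      _ = C := by
          field_simp
  have hHint : ∀ i j : Fin m, Integrable (fun ω => Hfun ω i j) μ := fun i j =>
    Integrable.mono' (integrable_const C) (hHmeas i j).aestronglyMeasurable
      (ae_of_all _ fun ω => hHbdd ω i j)
  -- quadratic form of H is integrable
  have hquadH_int : ∀ y : Fin m → ℂ, Integrable (fun ω => star y ⬝ᵥ Hfun ω *ᵥ y) μ := by
    intro y
    have e : (fun ω => star y ⬝ᵥ Hfun ω *ᵥ y)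
        = fun ω => ∑ i, (star y) i * ∑ j, Hfun ω i j * y j := rfl
    rw [e]
    exact integrable_finset_sum _ fun i _ =>
      (integrable_finset_sum _ fun j _ => (hHint i j).mul_const _).const_mul _
  -- exchange quadratic form and integral
  have hswap : ∀ y : Fin m → ℂ, star y ⬝ᵥ G *ᵥ y = ∫ ω, star y ⬝ᵥ Hfun ω *ᵥ y ∂μ := by
    intro y
    have e0 : star y ⬝ᵥ G *ᵥ y
        = ∑ i, ∑ j, (star y) i * ((∫ ω, Hfun ω i j ∂μ) * y j) := by
      simp only [hG, dotProduct, Matrix.mulVec, Matrix.of_apply, Finset.mul_sum, hHdef]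
    rw [e0]
    have e1 : ∀ i j : Fin m, (star y) i * ((∫ ω, Hfun ω i j ∂μ) * y j)
        = ∫ ω, (star y) i * (Hfun ω i j * y j) ∂μ := by
      intro i j
      rw [← integral_mul_const, ← integral_const_mul]
    simp_rw [e1]
    have e2 : ∀ i : Fin m, ∑ j, ∫ ω, (star y) i * (Hfun ω i j * y j) ∂μ
        = ∫ ω, ∑ j, (star y) i * (Hfun ω i j * y j) ∂μ := fun i =>
      (integral_finset_sum _ fun j _ => ((hHint i j).mul_const _).const_mul _).symm
    simp_rw [e2]
    rw [← integral_finset_sum _ (fun i _ => integrable_finset_sum _ fun j _ =>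
      ((hHint i j).mul_const _).const_mul _)]
    refine integral_congr_ae (ae_of_all _ fun ω => ?_)
    simp [dotProduct, Matrix.mulVec, Finset.mul_sum]
  -- quadratic form of H has nonpositive imaginary part
  have hHim : ∀ ω (y : Fin m → ℂ), (star y ⬝ᵥ Hfun ω *ᵥ y).im ≤ 0 := by
    intro ω y
    have e1 : star y ⬝ᵥ Hfun ω *ᵥ y = (n : ℂ)⁻¹ *
        ∑ k : Fin n, star y ⬝ᵥ (blk ((lam ⊗ₖ (1 : Matrix (Fin n) (Fin n) ℂ) - S ω)⁻¹) k k) *ᵥ y := by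
      rw [hHdef]
      show star y ⬝ᵥ (partialTrace _) *ᵥ y = _
      rw [partialTrace, Matrix.smul_mulVec, dotProduct_smul, smul_eq_mul,
        quad_sum]
    have e2 : ((n : ℂ))⁻¹ = (((n : ℝ)⁻¹ : ℝ) : ℂ) := by push_cast; ring
    rw [e1, e2, Complex.im_ofReal_mul, Complex.im_sum]
    have h1 : ∑ k : Fin n,
        (star y ⬝ᵥ (blk ((lam ⊗ₖ (1 : Matrix (Fin n) (Fin n) ℂ) - S ω)⁻¹) k k) *ᵥ y).im ≤ 0 := by
      refine Finset.sum_nonpos fun k _ => ?_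
      rw [quad_blk]
      exact hresim ω _
    have h2 : (0:ℝ) ≤ (n : ℝ)⁻¹ := by positivity
    nlinarith
  -- imaginary part of the quadratic form of G is nonpositive
  have hImG : ∀ w : Fin m → ℂ, (star w ⬝ᵥ G *ᵥ w).im ≤ 0 := by
    intro w
    rw [hswap w]
    have h2 := integral_im (μ := μ) (hquadH_int w)
    simp only [RCLike.im_to_complex] at h2
    rw [← h2]
    exact integral_nonpos fun ω => hHim ω w
  -- the α G α terms
  have hαG : ∀ (v : Fin r) (y : Fin m → ℂ), (star y ⬝ᵥ (α v * G * α v) *ᵥ y).im ≤ 0 := by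
    intro v y
    have e : star y ⬝ᵥ (α v * G * α v) *ᵥ y = star (α v *ᵥ y) ⬝ᵥ G *ᵥ (α v *ᵥ y) := by
      rw [← Matrix.mulVec_mulVec, ← Matrix.mulVec_mulVec, Matrix.dotProduct_mulVec,
        show (star y) ᵥ* (α v) = star (α v *ᵥ y) from by rw [Matrix.star_mulVec, (hα v).eq]]
    rw [e]
    exact hImG _
  -- the sum of the β ⊗ A terms is Hermitian
  have hABherm : (∑ u, β u ⊗ₖ A u).IsHermitian := by
    show _ᴴ = _
    rw [Matrix.conjTranspose_sum]
    exact Finset.sum_congr rfl fun u _ => kron_isHermitian (hβ u) (hA u)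
  -- coercivity for the target matrix
  have hΛlow : ∀ x : Fin m × Fin n → ℂ, c * ‖ev x‖ ^ 2 ≤
      (star x ⬝ᵥ ((lam - γ - ∑ v, α v * G * α v) ⊗ₖ (1 : Matrix (Fin n) (Fin n) ℂ)
        - ∑ u, β u ⊗ₖ A u) *ᵥ x).im := by
    intro x
    rw [Matrix.sub_mulVec, dotProduct_sub, Complex.sub_im, quad_im_zero hABherm,
      sub_zero, quad_kron_one, Complex.im_sum, ev_prod_norm_sq, Finset.mul_sum]
    refine Finset.sum_le_sum fun k _ => ?_
    rw [Matrix.sub_mulVec, dotProduct_sub, Complex.sub_im,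
      Matrix.sub_mulVec, dotProduct_sub, Complex.sub_im,
      quad_im_zero hγ, quad_sum, Complex.im_sum]
    have h1 : ∑ v, (star (fun a => x (a, k)) ⬝ᵥ (α v * G * α v) *ᵥ (fun a => x (a, k))).im ≤ 0 :=
      Finset.sum_nonpos fun v _ => hαG v _
    have h2 := hmlow (fun a => x (a, k))
    linarith
  have final := unit_and_bound _ hc hΛlow
  refine ⟨final.1, ?_⟩
  have h := final.2
  rwa [hcdef, inv_inv] at h
end
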